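/- Let X be a T0 space and let 𝒜 be a family of subsets of X that is ≪-filtered (for any A₁, A₂ ∈ 𝒜 there is A₃ ∈ 𝒜 with A₃ ≪ A₁ and A₃ ≪ A₂). If C is a closed subset of X intersecting every member of 𝒜, then C contains a closed subset F, minimal among closed sets intersecting every member of 𝒜, and any such minimal F is irreducible. -/

import Mathlib

open Set

def RelCpt {X : Type*} [TopologicalSpace X] (A B : Set X) : Prop :=
  A ⊆ B ∧ ∀ 𝒰 : Set (Set X), (∀ U ∈ 𝒰, IsOpen U) → B ⊆ ⋃₀ 𝒰 →
    ∃ 𝒱 ⊆ 𝒰, 𝒱.Finite ∧ A ⊆ ⋃₀ 𝒱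

def Saturated {X : Type*} [TopologicalSpace X] (A : Set X) : Prop :=
  A = ⋂₀ {U : Set X | IsOpen U ∧ A ⊆ U}

def WellFiltered (X : Type*) [TopologicalSpace X] : Prop :=
  ∀ 𝒦 : Set (Set X), 𝒦.Nonempty →
    (∀ K ∈ 𝒦, IsCompact K ∧ Saturated K) →
    (∀ K₁ ∈ 𝒦, ∀ K₂ ∈ 𝒦, ∃ K₃ ∈ 𝒦, K₃ ⊆ K₁ ∧ K₃ ⊆ K₂) →
    ∀ U : Set X, IsOpen U → ⋂₀ 𝒦 ⊆ U → ∃ K ∈ 𝒦, K ⊆ U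

def OmegaWellFiltered (X : Type*) [TopologicalSpace X] : Prop :=
  ∀ K : ℕ → Set X, (∀ n, IsCompact (K n) ∧ Saturated (K n)) →
    (∀ m n : ℕ, ∃ k, K k ⊆ K m ∧ K k ⊆ K n) →
    ∀ U : Set X, IsOpen U → (⋂ n, K n) ⊆ U → ∃ n, K n ⊆ U

def SatWellFiltered (X : Type*) [TopologicalSpace X] : Prop :=
  ∀ 𝒜 : Set (Set X), 𝒜.Nonempty →
    (∀ A ∈ 𝒜, Saturated A) →
    (∀ A₁ ∈ 𝒜, ∀ A₂ ∈ 𝒜, ∃ A₃ ∈ 𝒜, RelCpt A₃ A₁ ∧ RelCpt A₃ A₂) →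
    ∀ U : Set X, IsOpen U → ⋂₀ 𝒜 ⊆ U → ∃ A ∈ 𝒜, A ⊆ U

def SatOmegaWellFiltered (X : Type*) [TopologicalSpace X] : Prop :=
  ∀ A : ℕ → Set X, (∀ n, Saturated (A n)) →
    (∀ m n : ℕ, ∃ k, RelCpt (A k) (A m) ∧ RelCpt (A k) (A n)) →
    ∀ U : Set X, IsOpen U → (⋂ n, A n) ⊆ U → ∃ n, A n ⊆ U

def OpenWellFiltered (X : Type*) [TopologicalSpace X] : Prop :=
  ∀ 𝒜 : Set (Set X), 𝒜.Nonempty →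
    (∀ A ∈ 𝒜, IsOpen A) →
    (∀ A₁ ∈ 𝒜, ∀ A₂ ∈ 𝒜, ∃ A₃ ∈ 𝒜, RelCpt A₃ A₁ ∧ RelCpt A₃ A₂) →
    ∀ U : Set X, IsOpen U → ⋂₀ 𝒜 ⊆ U → ∃ A ∈ 𝒜, A ⊆ U

def OpenOmegaWellFiltered (X : Type*) [TopologicalSpace X] : Prop :=
  ∀ A : ℕ → Set X, (∀ n, IsOpen (A n)) →
    (∀ m n : ℕ, ∃ k, RelCpt (A k) (A m) ∧ RelCpt (A k) (A n)) →
    ∀ U : Set X, IsOpen U → (⋂ n, A n) ⊆ U → ∃ n, A n ⊆ U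

def CoreCompact (X : Type*) [TopologicalSpace X] : Prop :=
  ∀ (x : X) (U : Set X), IsOpen U → x ∈ U → ∃ V : Set X, IsOpen V ∧ x ∈ V ∧ RelCpt V U

def Sober (X : Type*) [TopologicalSpace X] : Prop :=
  ∀ F : Set X, IsClosed F → F.Nonempty →
    (∀ F₁ F₂ : Set X, IsClosed F₁ → IsClosed F₂ → F ⊆ F₁ ∪ F₂ → F ⊆ F₁ ∨ F ⊆ F₂) →
    ∃! x : X, F = closure {x}

/-- Rudin-type lemma: a closed set meeting all members of a ≪-filtered family contains a
minimal closed set meeting all members, and any such minimal closed set is irreducible. -/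
theorem stmt1 (X : Type*) [TopologicalSpace X] [T0Space X]
    (𝒜 : Set (Set X)) (hne : 𝒜.Nonempty)
    (hfilt : ∀ A₁ ∈ 𝒜, ∀ A₂ ∈ 𝒜, ∃ A₃ ∈ 𝒜, RelCpt A₃ A₁ ∧ RelCpt A₃ A₂)
    (C : Set X) (hC : IsClosed C) (hmeets : ∀ A ∈ 𝒜, (C ∩ A).Nonempty) :
    (∃ F : Set X, F ⊆ C ∧ IsClosed F ∧ (∀ A ∈ 𝒜, (F ∩ A).Nonempty) ∧
      (∀ F' : Set X, IsClosed F' → F' ⊆ F → (∀ A ∈ 𝒜, (F' ∩ A).Nonempty) → F' = F)) ∧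
    ∀ F : Set X, IsClosed F → (∀ A ∈ 𝒜, (F ∩ A).Nonempty) →
      (∀ F' : Set X, IsClosed F' → F' ⊆ F → (∀ A ∈ 𝒜, (F' ∩ A).Nonempty) → F' = F) →
      F.Nonempty ∧
        ∀ F₁ F₂ : Set X, IsClosed F₁ → IsClosed F₂ → F ⊆ F₁ ∪ F₂ → F ⊆ F₁ ∨ F ⊆ F₂ := by
  constructor
  · -- existence of a minimal closed set via Zorn
    set S : Set (Set X) := {F | IsClosed F ∧ ∀ A ∈ 𝒜, (F ∩ A).Nonempty} with hS
    have hCS : C ∈ S := ⟨hC, hmeets⟩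
    have hchain : ∀ c ⊆ S, IsChain (· ⊆ ·) c → c.Nonempty →
        ∃ lb ∈ S, ∀ s ∈ c, lb ⊆ s := by
      intro c hcS hchain ⟨F₀, hF₀⟩
      refine ⟨⋂₀ c, ⟨isClosed_sInter fun F hF => (hcS hF).1, ?_⟩,
        fun s hs => sInter_subset_of_mem hs⟩
      intro A hA
      obtain ⟨A', hA', hrel, -⟩ := hfilt A hA A hA
      by_contra hcon
      rw [not_nonempty_iff_eq_empty] at hcon
      -- A is covered by complements of members of c
      have hcover : A ⊆ ⋃₀ (compl '' c) := by
        intro x hx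
        by_contra hx'
        have : x ∈ ⋂₀ c := by
          intro F hF
          by_contra hxF
          exact hx' ⟨Fᶜ, mem_image_of_mem _ hF, hxF⟩
        have hmem : x ∈ (⋂₀ c) ∩ A := ⟨this, hx⟩
        rw [hcon] at hmem
        exact hmem
      obtain ⟨𝒱, h𝒱sub, h𝒱fin, h𝒱cover⟩ := hrel.2 (compl '' c)
        (by rintro U ⟨F, hF, rfl⟩; exact (hcS hF).1.isOpen_compl) hcover
      -- the chain members whose complements are in 𝒱
      set T : Set (Set X) := {F ∈ c | Fᶜ ∈ 𝒱} with hT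
      have hTfin : T.Finite := by
        have hp : (compl ⁻¹' 𝒱 : Set (Set X)).Finite :=
          Set.Finite.preimage (fun a _ b _ h => compl_injective h) h𝒱fin
        exact hp.subset fun F hF => hF.2
      have hTne : T.Nonempty := by
        obtain ⟨x, hxF₀, hxA'⟩ := (hcS hF₀).2 A' hA'
        obtain ⟨V, hV, hxV⟩ := h𝒱cover hxA'
        obtain ⟨F, hF, rfl⟩ := h𝒱sub hV
        exact ⟨F, hF, show Fᶜ ∈ 𝒱 from hV⟩
      obtain ⟨G, hGT, hGmin⟩ : ∃ G ∈ T, ∀ F ∈ T, id F ≤ id G → id G = id F := by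
        obtain ⟨G, hG⟩ := hTfin.exists_minimal hTne
        exact ⟨G, hG.1, fun F hF h => le_antisymm (hG.2 hF h) h⟩
      have hGleast : ∀ F ∈ T, G ⊆ F := by
        intro F hF
        rcases hchain.total hGT.1 hF.1 with h | h
        · exact h
        · exact le_of_eq (hGmin F hF h)
      -- G ∩ A' should be nonempty but A' ⊆ Gᶜ
      obtain ⟨x, hxG, hxA'⟩ := (hcS hGT.1).2 A' hA'
      obtain ⟨V, hV, hxV⟩ := h𝒱cover hxA'
      obtain ⟨F, hF, rfl⟩ := h𝒱sub hV
      exact hxV (hGleast F ⟨hF, show Fᶜ ∈ 𝒱 from hV⟩ hxG)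
    obtain ⟨F, hFC, hFmin⟩ := zorn_superset_nonempty S hchain C hCS
    exact ⟨F, hFC, hFmin.prop.1, hFmin.prop.2,
      fun F' hF' hF'F hF'meets => hFmin.eq_of_subset ⟨hF', hF'meets⟩ hF'F⟩
  · -- minimality implies irreducibility
    intro F hFcl hFmeets hFmin
    obtain ⟨A₀, hA₀⟩ := hne
    refine ⟨((hFmeets A₀ hA₀).mono inter_subset_left), ?_⟩
    intro F₁ F₂ h₁ h₂ hsub
    by_contra hcon
    push_neg at hcon
    have key : ∀ G : Set X, IsClosed G → ¬ F ⊆ G → ∃ A ∈ 𝒜, (F ∩ G) ∩ A = ∅ := by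
      intro G hG hFG
      by_contra h
      push_neg at h
      have := hFmin (F ∩ G) (hFcl.inter hG) inter_subset_left (fun A hA => h A hA)
      exact hFG (by rw [← this]; exact inter_subset_right)
    obtain ⟨A₁, hA₁, hA₁e⟩ := key F₁ h₁ hcon.1
    obtain ⟨A₂, hA₂, hA₂e⟩ := key F₂ h₂ hcon.2
    obtain ⟨A₃, hA₃, hr₁, hr₂⟩ := hfilt A₁ hA₁ A₂ hA₂
    obtain ⟨x, hxF, hxA₃⟩ := hFmeets A₃ hA₃
    rcases hsub hxF with hx₁ | hx₂
    · have hmem : x ∈ (F ∩ F₁) ∩ A₁ := ⟨⟨hxF, hx₁⟩, hr₁.1 hxA₃⟩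
      rw [hA₁e] at hmem; exact hmem
    · have hmem : x ∈ (F ∩ F₂) ∩ A₂ := ⟨⟨hxF, hx₂⟩, hr₂.1 hxA₃⟩
      rw [hA₂e] at hmem; exact hmem
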